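/- arXiv:2006.14172 — 2 statements merged into one kernel-verified Lean document; each statement's English description precedes it below -/
import Mathlib

section
/- Let α, c ∈ ℝ with c² ≠ 1 and let V : ℝ → ℝ be continuously differentiable. At every point (q,p) ∈ ℝ² × ℝ² with ⟨p, q⟩ ≠ 0, the full gradients of the Hamiltonian ℋ and of the invariant I_rot(q,p) = ⟨Jp,q⟩, namely ∇ℋ(q,p) = (∇_q ℋ(q,p), ∇_p ℋ(q,p)) ∈ ℝ² × ℝ² and ∇I_rot(q,p) = (Jp, −Jq) ∈ ℝ² × ℝ², are linearly independent over ℝ. In particular ℋ and I_rot are functionally independent on the open set {(q,p) : ⟨p,q⟩ ≠ 0}. -/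
noncomputable section

open RealInnerProductSpace

/-- The Euclidean plane. -/
abbrev E2 : Type := EuclideanSpace ℝ (Fin 2)

/-- The linear map `J(x₁,x₂) = (x₂, −x₁)`. -/
def Jmap (v : E2) : E2 := WithLp.toLp 2 ![v 1, -v 0]

/-- The rotation `R(t) = exp(tαJ)`. -/
def Rot (α t : ℝ) (v : E2) : E2 :=
  WithLp.toLp 2 ![Real.cos (α * t) * v 0 + Real.sin (α * t) * v 1,
    -Real.sin (α * t) * v 0 + Real.cos (α * t) * v 1]

/-- The symmetrised first-order Lagrangian `L⁰`. -/
def L0 (α c : ℝ) (V : ℝ → ℝ) (a v : E2) : ℝ :=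
  (1 / 2) * (α ^ 2 * ⟪a, a⟫ - 2 * α * c * ⟪Jmap a, v⟫ + (c ^ 2 - 1) * ⟪v, v⟫ + V ⟪a, a⟫)

/-- The Hamiltonian `ℋ` obtained as the Legendre transform of `L⁰`. -/
def Ham (α c : ℝ) (V : ℝ → ℝ) (q p : E2) : ℝ :=
  (1 / (2 * (c ^ 2 - 1))) *
    (‖p‖ ^ 2 + 2 * c * α * ⟪p, Jmap q⟫ + α ^ 2 * ‖q‖ ^ 2 - (c ^ 2 - 1) * V (‖q‖ ^ 2))

lemma inner_Jmap_self (v : E2) : ⟪Jmap v, v⟫ = 0 := by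
  simp [Jmap, PiLp.inner_apply, Fin.sum_univ_two]
  ring

lemma Jmap_eq_zero {v : E2} (hv : Jmap v = 0) : v = 0 := by
  have h0 : (Jmap v) 0 = 0 := by rw [hv]; rfl
  have h1 : (Jmap v) 1 = 0 := by rw [hv]; rfl
  simp [Jmap] at h0 h1
  ext i
  fin_cases i <;> simp [h0, h1] <;> rfl

/-- at every point `(q,p)` with `⟨p,q⟩ ≠ 0`, the gradients
`∇ℋ(q,p) = (∇_qℋ, ∇_pℋ)` and `∇I_rot(q,p) = (Jp, −Jq)` are linearly independent. -/
theorem statement8 (α c : ℝ) (hc : c ^ 2 ≠ 1) (V : ℝ → ℝ) (hV : ContDiff ℝ 1 V)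
    (q p : E2) (h : ⟪p, q⟫ ≠ 0) :
    LinearIndependent ℝ
      ![(((c ^ 2 - 1)⁻¹ • ((α ^ 2) • q - (c * α) • Jmap p) - deriv V (‖q‖ ^ 2) • q,
           (c ^ 2 - 1)⁻¹ • (p + (c * α) • Jmap q)) : E2 × E2),
        ((Jmap p, -(Jmap q)) : E2 × E2)] := by
  have hc1 : c ^ 2 - 1 ≠ 0 := sub_ne_zero.mpr hc
  rw [LinearIndependent.pair_iff]
  intro s t hst
  have h2 : s • ((c ^ 2 - 1)⁻¹ • (p + (c * α) • Jmap q)) + t • (-(Jmap q)) = 0 :=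
    congrArg Prod.snd hst
  have hin : ⟪s • ((c ^ 2 - 1)⁻¹ • (p + (c * α) • Jmap q)) + t • (-(Jmap q)), q⟫ = 0 := by
    rw [h2]; exact inner_zero_left q
  simp only [inner_add_left, real_inner_smul_left, inner_neg_left, inner_Jmap_self] at hin
  have hs : s = 0 := by
    have hmul : s * ((c ^ 2 - 1)⁻¹ * ⟪p, q⟫) = 0 := by linarith [hin]
    rcases mul_eq_zero.mp hmul with hs | h'
    · exact hs
    · exact absurd (mul_eq_zero.mp h') (by push_neg; exact ⟨inv_ne_zero hc1, h⟩)
  refine ⟨hs, ?_⟩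
  rw [hs, zero_smul, zero_add, smul_neg, neg_eq_zero] at h2
  rcases smul_eq_zero.mp h2 with ht | hJ
  · exact ht
  · exact absurd (Jmap_eq_zero hJ) (fun hq => h (by rw [hq]; exact inner_zero_right p))
end
end

section
/- Let α, c ∈ ℝ, Δt, Δx > 0, let V : ℝ → ℝ be continuously differentiable, and set W(a) = ½V(‖a‖²). Define the discrete Lagrangian L_Δ(a,b) = −(c²/(2Δx²))·‖R(−Δt/2)·b − R(Δt/2)·a‖² + ‖b − a‖²/(2Δx²) − W(a) for a, b ∈ ℝ². Then a map φ : ℝ → ℝ² satisfies the discrete Euler–Lagrange equations D₁L_Δ(φ(ξ), φ(ξ+Δx)) + D₂L_Δ(φ(ξ−Δx), φ(ξ)) = 0 for all ξ ∈ ℝ (where D₁, D₂ denote the gradients of L_Δ with respect to its first and second arguments) if and only if φ satisfies the functional equation (c²/Δx²)(R(−Δt)·φ(ξ+Δx) − 2φ(ξ) + R(Δt)·φ(ξ−Δx)) − (1/Δx²)(φ(ξ+Δx) − 2φ(ξ) + φ(ξ−Δx)) − V'(‖φ(ξ)‖²)·φ(ξ) = 0 for all ξ ∈ ℝ. -/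
noncomputable section

open RealInnerProductSpace

/-- The discrete Lagrangian for the resonant case `Δx = cΔt`. -/
def LΔc (α c Δt Δx : ℝ) (V : ℝ → ℝ) (a b : E2) : ℝ :=
  -(c ^ 2 / (2 * Δx ^ 2)) * ‖Rot α (-(Δt / 2)) b - Rot α (Δt / 2) a‖ ^ 2
    + ‖b - a‖ ^ 2 / (2 * Δx ^ 2) - (1 / 2) * V (‖a‖ ^ 2)

lemma Rot_apply_zero (α t : ℝ) (v : E2) :
    Rot α t v 0 = Real.cos (α * t) * v 0 + Real.sin (α * t) * v 1 := rfl

lemma Rot_apply_one (α t : ℝ) (v : E2) :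
    Rot α t v 1 = -Real.sin (α * t) * v 0 + Real.cos (α * t) * v 1 := rfl

lemma Rot_sub (α t : ℝ) (v w : E2) : Rot α t (v - w) = Rot α t v - Rot α t w := by
  ext i
  fin_cases i <;>
    simp [Rot_apply_zero, Rot_apply_one, PiLp.sub_apply] <;> ring

lemma Rot_Rot (α s t : ℝ) (v : E2) : Rot α s (Rot α t v) = Rot α (s + t) v := by
  ext i
  fin_cases i <;>
    simp [Rot_apply_zero, Rot_apply_one, mul_add, Real.cos_add, Real.sin_add] <;> ring

lemma Rot_zero (α : ℝ) (v : E2) : Rot α 0 v = v := by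
  ext i
  fin_cases i <;>
    simp [Rot_apply_zero, Rot_apply_one]

lemma norm_sq_Rot (α t : ℝ) (v : E2) : ‖Rot α t v‖ ^ 2 = ‖v‖ ^ 2 := by
  rw [← real_inner_self_eq_norm_sq, ← real_inner_self_eq_norm_sq]
  simp only [PiLp.inner_apply, RCLike.inner_apply, conj_trivial, Fin.sum_univ_two,
    Rot_apply_zero, Rot_apply_one]
  have h := Real.sin_sq_add_cos_sq (α * t)
  nlinarith [h]

/-- Master gradient computation. -/
lemma master_grad (k₁ k₂ : ℝ) (u w : E2) (V : ℝ → ℝ) (hV : ContDiff ℝ 1 V) (x : E2) :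
    HasGradientAt (fun a : E2 => k₁ * ‖u - a‖ ^ 2 + k₂ * ‖w - a‖ ^ 2 - (1 / 2) * V (‖a‖ ^ 2))
      ((2 * k₁) • (x - u) + (2 * k₂) • (x - w) - ((deriv V (‖x‖ ^ 2)) • x)) x := by
  have hfun : (fun a : E2 => k₁ * ‖u - a‖ ^ 2 + k₂ * ‖w - a‖ ^ 2 - (1 / 2) * V (‖a‖ ^ 2))
      = fun a : E2 => k₁ * ⟪u - a, u - a⟫ + k₂ * ⟪w - a, w - a⟫ - (1 / 2) * V ⟪a, a⟫ := by
    funext a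
    rw [real_inner_self_eq_norm_sq, real_inner_self_eq_norm_sq, real_inner_self_eq_norm_sq]
  rw [hasGradientAt_iff_hasFDerivAt, hfun]
  have hsub1 : HasFDerivAt (fun a : E2 => u - a) (0 - ContinuousLinearMap.id ℝ E2) x :=
    (hasFDerivAt_const u x).sub (hasFDerivAt_id x)
  have hsub2 : HasFDerivAt (fun a : E2 => w - a) (0 - ContinuousLinearMap.id ℝ E2) x :=
    (hasFDerivAt_const w x).sub (hasFDerivAt_id x)
  have h1 := hsub1.inner ℝ hsub1
  have h2 := hsub2.inner ℝ hsub2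
  have hid := (hasFDerivAt_id x).inner ℝ (hasFDerivAt_id x)
  have hVd : HasDerivAt V (deriv V ⟪x, x⟫) ⟪x, x⟫ :=
    ((hV.differentiable one_ne_zero) ⟪x, x⟫).hasDerivAt
  have h3 : HasFDerivAt (fun a : E2 => V ⟪a, a⟫)
      ((deriv V ⟪x, x⟫) • ((fderivInnerCLM ℝ ((id x : E2), (id x : E2))).comp
        ((ContinuousLinearMap.id ℝ E2).prod (ContinuousLinearMap.id ℝ E2)))) x :=
    HasDerivAt.comp_hasFDerivAt (f := fun t : E2 => ⟪t, t⟫) x hVd hid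
  have combined := ((h1.const_mul k₁).add (h2.const_mul k₂)).sub (h3.const_mul (1 / 2))
  refine combined.congr_fderiv ?_
  have hx : ⟪x, x⟫ = ‖x‖ ^ 2 := real_inner_self_eq_norm_sq x
  ext y
  simp only [ContinuousLinearMap.add_apply, ContinuousLinearMap.sub_apply,
    ContinuousLinearMap.smul_apply, ContinuousLinearMap.comp_apply,
    ContinuousLinearMap.prod_apply, ContinuousLinearMap.zero_apply,
    ContinuousLinearMap.id_apply, fderivInnerCLM_apply, InnerProductSpace.toDual_apply_apply,
    smul_eq_mul, hx]
  simp only [PiLp.inner_apply, RCLike.inner_apply, conj_trivial, Fin.sum_univ_two,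
    PiLp.sub_apply, PiLp.add_apply, PiLp.smul_apply, PiLp.neg_apply, smul_eq_mul,
    zero_sub, id_eq]
  ring

lemma grad1 (α c Δt Δx : ℝ) (V : ℝ → ℝ) (hV : ContDiff ℝ 1 V) (b x : E2) :
    gradient (fun a => LΔc α c Δt Δx V a b) x
      = (2 * (-(c ^ 2 / (2 * Δx ^ 2)))) • (x - Rot α (-Δt) b)
        + (2 * (2 * Δx ^ 2)⁻¹) • (x - b) - deriv V (‖x‖ ^ 2) • x := by
  have hfun : (fun a => LΔc α c Δt Δx V a b)
      = fun a : E2 => (-(c ^ 2 / (2 * Δx ^ 2))) * ‖Rot α (-Δt) b - a‖ ^ 2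
          + (2 * Δx ^ 2)⁻¹ * ‖b - a‖ ^ 2 - (1 / 2) * V (‖a‖ ^ 2) := by
    funext a
    have h1 : ‖Rot α (-(Δt / 2)) b - Rot α (Δt / 2) a‖ ^ 2 = ‖Rot α (-Δt) b - a‖ ^ 2 := by
      rw [← norm_sq_Rot α (-(Δt / 2)) (Rot α (-(Δt / 2)) b - Rot α (Δt / 2) a), Rot_sub,
        Rot_Rot, Rot_Rot, show -(Δt / 2) + -(Δt / 2) = -Δt from by ring,
        show -(Δt / 2) + Δt / 2 = 0 from by ring, Rot_zero]
    rw [LΔc, h1]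
    ring
  rw [hfun]
  exact (master_grad _ _ _ _ V hV x).gradient

lemma grad2 (α c Δt Δx : ℝ) (V : ℝ → ℝ) (hV : ContDiff ℝ 1 V) (a x : E2) :
    gradient (fun b => LΔc α c Δt Δx V a b) x
      = (2 * (-(c ^ 2 / (2 * Δx ^ 2)))) • (x - Rot α Δt a)
        + (2 * (2 * Δx ^ 2)⁻¹) • (x - a) := by
  have hfun : (fun b => LΔc α c Δt Δx V a b)
      = fun b : E2 => (-(c ^ 2 / (2 * Δx ^ 2))) * ‖Rot α Δt a - b‖ ^ 2
          + (2 * Δx ^ 2)⁻¹ * ‖a - b‖ ^ 2 - (1 / 2) * (fun _ : ℝ => V (‖a‖ ^ 2)) (‖b‖ ^ 2) := by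
    funext b
    have h1 : ‖Rot α (-(Δt / 2)) b - Rot α (Δt / 2) a‖ ^ 2 = ‖Rot α Δt a - b‖ ^ 2 := by
      rw [← norm_sq_Rot α (Δt / 2) (Rot α (-(Δt / 2)) b - Rot α (Δt / 2) a), Rot_sub,
        Rot_Rot, Rot_Rot, show Δt / 2 + -(Δt / 2) = 0 from by ring,
        show Δt / 2 + Δt / 2 = Δt from by ring, Rot_zero, ← neg_sub (Rot α Δt a) b,
        norm_neg]
    rw [LΔc, h1, norm_sub_rev b a]
    ring
  rw [hfun]
  have := (master_grad (-(c ^ 2 / (2 * Δx ^ 2))) (2 * Δx ^ 2)⁻¹ (Rot α Δt a) a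
    (fun _ : ℝ => V (‖a‖ ^ 2)) contDiff_const x).gradient
  rw [this]
  simp

/-- `φ` satisfies the discrete Euler–Lagrange equations
`D₁L_Δ(φ(ξ), φ(ξ+Δx)) + D₂L_Δ(φ(ξ−Δx), φ(ξ)) = 0` iff `φ` satisfies the resonant
(`Δx = cΔt`) reduced functional equation of the five-point stencil. -/
theorem statement12 (α c Δt Δx : ℝ) (hΔt : 0 < Δt) (hΔx : 0 < Δx)
    (V : ℝ → ℝ) (hV : ContDiff ℝ 1 V) (φ : ℝ → E2) :
    (∀ ξ : ℝ,
        gradient (fun a => LΔc α c Δt Δx V a (φ (ξ + Δx))) (φ ξ)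
          + gradient (fun b => LΔc α c Δt Δx V (φ (ξ - Δx)) b) (φ ξ) = 0)
      ↔ (∀ ξ : ℝ,
          (c ^ 2 / Δx ^ 2) • (Rot α (-Δt) (φ (ξ + Δx)) - (2 : ℝ) • φ ξ
              + Rot α Δt (φ (ξ - Δx)))
            - (Δx ^ 2)⁻¹ • (φ (ξ + Δx) - (2 : ℝ) • φ ξ + φ (ξ - Δx))
            - deriv V (‖φ ξ‖ ^ 2) • φ ξ = 0) := by
  refine forall_congr' fun ξ => ?_
  rw [grad1 α c Δt Δx V hV (φ (ξ + Δx)) (φ ξ), grad2 α c Δt Δx V hV (φ (ξ - Δx)) (φ ξ)]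
  have hΔ : Δx ^ 2 ≠ 0 := pow_ne_zero 2 hΔx.ne'
  have key : (2 * (-(c ^ 2 / (2 * Δx ^ 2)))) • (φ ξ - Rot α (-Δt) (φ (ξ + Δx)))
        + (2 * (2 * Δx ^ 2)⁻¹) • (φ ξ - φ (ξ + Δx)) - deriv V (‖φ ξ‖ ^ 2) • φ ξ
        + ((2 * (-(c ^ 2 / (2 * Δx ^ 2)))) • (φ ξ - Rot α Δt (φ (ξ - Δx)))
          + (2 * (2 * Δx ^ 2)⁻¹) • (φ ξ - φ (ξ - Δx)))
      = (c ^ 2 / Δx ^ 2) • (Rot α (-Δt) (φ (ξ + Δx)) - (2 : ℝ) • φ ξ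
            + Rot α Δt (φ (ξ - Δx)))
          - (Δx ^ 2)⁻¹ • (φ (ξ + Δx) - (2 : ℝ) • φ ξ + φ (ξ - Δx))
          - deriv V (‖φ ξ‖ ^ 2) • φ ξ := by
    have e1 : 2 * (-(c ^ 2 / (2 * Δx ^ 2))) = -(c ^ 2 / Δx ^ 2) := by
      field_simp
    have e2 : 2 * (2 * Δx ^ 2)⁻¹ = (Δx ^ 2)⁻¹ := by
      field_simp
    rw [e1, e2]
    module
  rw [key]
end
end
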